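/- arXiv:2008.07474 — 3 statements merged into one kernel-verified Lean document; each statement's English description precedes it below -/
import Mathlib

section
/- Let G be a τ-critical graph with τ(G) = t and |V(G)| = n, and let λ₁ denote the largest eigenvalue of the adjacency matrix of G. Then n + λ₁ ≤ 2t + 1. -/
open SimpleGraph

variable {V : Type*}

/-- A transversal set (vertex cover): a set of vertices incident to all edges. -/
def IsTransversal (G : SimpleGraph V) (T : Finset V) : Prop :=
  ∀ ⦃u v : V⦄, G.Adj u v → u ∈ T ∨ v ∈ T

/-- The transversal number `τ(G)`: minimum cardinality of a transversal set. -/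
noncomputable def tauNum (G : SimpleGraph V) [Fintype V] : ℕ :=
  sInf {k | ∃ T : Finset V, T.card = k ∧ IsTransversal G T}

/-- `G` is τ-critical: it has no isolated vertex and deleting any edge decreases `τ`. -/
def IsTauCritical (G : SimpleGraph V) [Fintype V] : Prop :=
  (∀ v : V, ∃ u, G.Adj v u) ∧
    ∀ e ∈ G.edgeSet, tauNum (G.deleteEdges {e}) < tauNum G

/-- `mK2 m` is the disjoint union of `m` copies of `K₂`. -/
def mK2 (m : ℕ) : SimpleGraph (Fin m × Fin 2) where
  Adj x y := x.1 = y.1 ∧ x.2 ≠ y.2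
  symm := ⟨fun _ _ ⟨h1, h2⟩ => ⟨h1.symm, h2.symm⟩⟩
  loopless := ⟨fun _ ⟨_, h⟩ => h rfl⟩

/-- The spectral radius `λ₁(G)`: the largest eigenvalue of the adjacency matrix of `G`. -/
noncomputable def specRad (G : SimpleGraph V) [Fintype V] [DecidableEq V]
    [DecidableRel G.Adj] : ℝ :=
  sSup (spectrum ℝ (G.adjMatrix ℝ))

/-- The signless Laplacian spectral radius `q₁(G)`: the largest eigenvalue of
`Q(G) = D(G) + A(G)`. -/
noncomputable def signlessLapSpecRad (G : SimpleGraph V) [Fintype V] [DecidableEq V]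
    [DecidableRel G.Adj] : ℝ :=
  sSup (spectrum ℝ (Matrix.diagonal (fun v => (G.degree v : ℝ)) + G.adjMatrix ℝ))

section Aux

open Finset

variable [Fintype V] [DecidableEq V] {G : SimpleGraph V} [DecidableRel G.Adj]

set_option linter.unusedSectionVars false

lemma tauNum_exists (G : SimpleGraph V) :
    ∃ T : Finset V, T.card = tauNum G ∧ IsTransversal G T := by
  have h : tauNum G ∈ {k | ∃ T : Finset V, T.card = k ∧ IsTransversal G T} := by
    apply Nat.sInf_mem
    exact ⟨(Finset.univ : Finset V).card, Finset.univ, rfl,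
      fun u _ _ => Or.inl (Finset.mem_univ u)⟩
  exact h

lemma tauNum_le {T : Finset V} (hT : IsTransversal G T) : tauNum G ≤ T.card :=
  Nat.sInf_le ⟨T, rfl, hT⟩

/-- From τ-criticality, for each edge `ab` obtain a small transversal of `G - ab`
missing both endpoints. -/
lemma exists_crit_cover (hcrit : IsTauCritical G) {a b : V} (hab : G.Adj a b) :
    ∃ S : Finset V, S.card < tauNum G ∧
      IsTransversal (G.deleteEdges {s(a, b)}) S ∧ a ∉ S ∧ b ∉ S := by
  have hlt := hcrit.2 _ (G.mem_edgeSet.mpr hab)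
  obtain ⟨S, hca, hS⟩ := tauNum_exists (G.deleteEdges {s(a, b)})
  have hcard : S.card < tauNum G := hca ▸ hlt
  have hfull : (a ∈ S ∨ b ∈ S) → IsTransversal G S := by
    intro hmem x y hxy
    by_cases hxe : s(x, y) = s(a, b)
    · rcases Sym2.eq_iff.mp hxe with ⟨rfl, rfl⟩ | ⟨rfl, rfl⟩
      · exact hmem
      · exact hmem.symm
    · exact hS (SimpleGraph.deleteEdges_adj.mpr ⟨hxy, by simpa using hxe⟩)
  refine ⟨S, hcard, hS, fun haS => ?_, fun hbS => ?_⟩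
  · exact absurd (tauNum_le (hfull (Or.inl haS))) (Nat.not_le.mpr hcard)
  · exact absurd (tauNum_le (hfull (Or.inr hbS))) (Nat.not_le.mpr hcard)

/-- If `S` is a transversal of `G - ab` and `x ∉ S` is not an endpoint of the deleted
edge, then all neighbors of `x` are in `S`. -/
lemma nbrs_subset_cover {a b : V} {S : Finset V}
    (hS : IsTransversal (G.deleteEdges {s(a, b)}) S) {x y : V}
    (hxy : G.Adj x y) (hx : x ∉ S) (hne : s(x, y) ≠ s(a, b)) : y ∈ S :=
  (hS (SimpleGraph.deleteEdges_adj.mpr ⟨hxy, by simpa using hne⟩)).resolve_left hx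

/-- The swapped set `(S \ A) ∪ N(A)` is a transversal of `G`, provided `A` is
independent and the deleted edge has an endpoint in `A`. -/
lemma swap_transversal {a b : V} {S A : Finset V}
    (hS : IsTransversal (G.deleteEdges {s(a, b)}) S)
    (hind : ∀ x ∈ A, ∀ y ∈ A, ¬G.Adj x y) (haA : a ∈ A) :
    IsTransversal G ((S \ A) ∪ A.biUnion (fun x => G.neighborFinset x)) := by
  intro x y hxy
  by_cases hx : x ∈ A
  · exact Or.inr (Finset.mem_union_right _ (Finset.mem_biUnion.mpr
      ⟨x, hx, (G.mem_neighborFinset x y).mpr hxy⟩))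
  by_cases hy : y ∈ A
  · exact Or.inl (Finset.mem_union_right _ (Finset.mem_biUnion.mpr
      ⟨y, hy, (G.mem_neighborFinset y x).mpr hxy.symm⟩))
  have hne : s(x, y) ≠ s(a, b) := by
    intro h
    rcases Sym2.eq_iff.mp h with ⟨rfl, rfl⟩ | ⟨rfl, rfl⟩
    · exact hx haA
    · exact hy haA
  rcases hS (SimpleGraph.deleteEdges_adj.mpr ⟨hxy, by simpa using hne⟩) with h | h
  · exact Or.inl (Finset.mem_union_left _ (Finset.mem_sdiff.mpr ⟨h, hx⟩))
  · exact Or.inr (Finset.mem_union_left _ (Finset.mem_sdiff.mpr ⟨h, hy⟩))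

/-- The key counting consequence of the swap: `|S ∩ A| + 1 ≤ |N(A) \ S|`. -/
lemma swap_count {a b : V} {S A : Finset V}
    (hS : IsTransversal (G.deleteEdges {s(a, b)}) S)
    (hcard : S.card < tauNum G)
    (hind : ∀ x ∈ A, ∀ y ∈ A, ¬G.Adj x y) (haA : a ∈ A) :
    (S ∩ A).card + 1 ≤ ((A.biUnion (fun x => G.neighborFinset x)) \ S).card := by
  set NA := A.biUnion (fun x => G.neighborFinset x) with hNA
  have hNAA : ∀ y ∈ NA, y ∉ A := by
    intro y hy hyA
    obtain ⟨z, hz, hzy⟩ := Finset.mem_biUnion.mp hy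
    exact hind z hz y hyA ((G.mem_neighborFinset z y).mp hzy)
  have htr := swap_transversal hS hind haA
  have h1 : tauNum G ≤ ((S \ A) ∪ NA).card := tauNum_le htr
  have h2 : (S \ A) ∪ NA ⊆ (S \ A) ∪ (NA \ S) := by
    intro z hz
    rcases Finset.mem_union.mp hz with h | h
    · exact Finset.mem_union_left _ h
    · by_cases hzS : z ∈ S
      · exact Finset.mem_union_left _ (Finset.mem_sdiff.mpr ⟨hzS, hNAA z h⟩)
      · exact Finset.mem_union_right _ (Finset.mem_sdiff.mpr ⟨h, hzS⟩)
  have h3 : tauNum G ≤ (S \ A).card + (NA \ S).card :=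
    h1.trans ((Finset.card_le_card h2).trans (Finset.card_union_le _ _))
  have h4 : (S \ A).card + (S ∩ A).card = S.card := Finset.card_sdiff_add_card_inter S A
  omega

/-- **Hall-type lemma for τ-critical graphs**: every independent set `A`
satisfies `|A| ≤ |N(A)|`. -/
lemma hall_lemma (hcrit : IsTauCritical G) :
    ∀ A : Finset V, (∀ x ∈ A, ∀ y ∈ A, ¬G.Adj x y) →
      A.card ≤ (A.biUnion (fun x => G.neighborFinset x)).card := by
  intro A
  induction A using Finset.strongInduction with
  | _ A IH =>
    intro hind
    rcases A.eq_empty_or_nonempty with rfl | ⟨a₀, ha₀⟩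
    · simp
    obtain ⟨b₀, hb₀⟩ := hcrit.1 a₀
    obtain ⟨S, hScard, hS, ha₀S, hb₀S⟩ := exists_crit_cover hcrit hb₀
    set NA := A.biUnion (fun x => G.neighborFinset x) with hNAdef
    have hb₀A : b₀ ∉ A := fun h => hind a₀ ha₀ b₀ h hb₀
    have hcount := swap_count hS hScard hind ha₀
    rw [← hNAdef] at hcount
    -- the inner set
    set A' := (A \ S).erase a₀ with hA'def
    have hA'sub : A' ⊆ A := (Finset.erase_subset _ _).trans (Finset.sdiff_subset)
    have hA'ssub : A' ⊂ A :=
      (Finset.ssubset_iff_of_subset hA'sub).mpr ⟨a₀, ha₀, Finset.notMem_erase _ _⟩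
    have hA'ind : ∀ x ∈ A', ∀ y ∈ A', ¬G.Adj x y :=
      fun x hx y hy => hind x (hA'sub hx) y (hA'sub hy)
    have hIH := IH A' hA'ssub hA'ind
    set NA' := A'.biUnion (fun x => G.neighborFinset x) with hNA'def
    have hNA'S : NA' ⊆ S := by
      intro y hy
      obtain ⟨z, hz, hzy⟩ := Finset.mem_biUnion.mp hy
      have hzA : z ∈ A := hA'sub hz
      have hzS : z ∉ S := (Finset.mem_sdiff.mp (Finset.mem_of_mem_erase hz)).2
      have hza₀ : z ≠ a₀ := Finset.ne_of_mem_erase hz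
      refine nbrs_subset_cover hS ((G.mem_neighborFinset z y).mp hzy) hzS (fun h => ?_)
      rcases Sym2.eq_iff.mp h with ⟨rfl, rfl⟩ | ⟨rfl, rfl⟩
      · exact hza₀ rfl
      · exact hb₀A hzA
    have hNA'NA : NA' ⊆ NA := Finset.biUnion_subset_biUnion_of_subset_left _ hA'sub
    -- combine
    have hdisj : Disjoint (NA \ S) NA' := by
      refine Finset.disjoint_left.mpr (fun z hz hz' => ?_)
      exact (Finset.mem_sdiff.mp hz).2 (hNA'S hz')
    have hsum : (NA \ S).card + NA'.card ≤ NA.card := by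
      rw [← Finset.card_union_of_disjoint hdisj]
      exact Finset.card_le_card (Finset.union_subset (Finset.sdiff_subset) hNA'NA)
    have hAcard : (A \ S).card + (A ∩ S).card = A.card := Finset.card_sdiff_add_card_inter A S
    have ha₀AS : a₀ ∈ A \ S := Finset.mem_sdiff.mpr ⟨ha₀, ha₀S⟩
    have hA'card : A'.card + 1 = (A \ S).card := Finset.card_erase_add_one ha₀AS
    have hinter : S ∩ A = A ∩ S := Finset.inter_comm S A
    rw [hinter] at hcount
    omega

/-- **Refined Hall lemma**: for an independent set `A` and `v ∈ A`,
`|A| ≤ |N(A) \ N(v)| + 1`. -/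
lemma refined_hall (hcrit : IsTauCritical G) :
    ∀ A : Finset V, (∀ x ∈ A, ∀ y ∈ A, ¬G.Adj x y) → ∀ v ∈ A,
      A.card ≤ ((A.biUnion (fun x => G.neighborFinset x)) \ G.neighborFinset v).card + 1 := by
  intro A
  induction A using Finset.strongInduction with
  | _ A IH =>
    intro hind v hv
    set NA := A.biUnion (fun x => G.neighborFinset x) with hNAdef
    set Nv := G.neighborFinset v with hNvdef
    by_cases hQ : ∃ a₁ ∈ A.erase v, ∃ q, G.Adj a₁ q ∧ G.Adj v q
    · -- a common neighbor exists
      obtain ⟨a₁, ha₁e, q, ha₁q, hvq⟩ := hQ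
      have ha₁A : a₁ ∈ A := Finset.mem_of_mem_erase ha₁e
      have ha₁v : a₁ ≠ v := Finset.ne_of_mem_erase ha₁e
      have hqA : q ∉ A := fun h => hind a₁ ha₁A q h ha₁q
      obtain ⟨S, hScard, hS, hvS, hqS⟩ := exists_crit_cover hcrit hvq
      -- a₁ must be in S to cover the edge a₁q
      have ha₁S : a₁ ∈ S := by
        have hne : s(a₁, q) ≠ s(v, q) := by
          intro h
          rcases Sym2.eq_iff.mp h with ⟨h1, -⟩ | ⟨h1, -⟩
          · exact ha₁v h1
          · exact G.irrefl (h1 ▸ ha₁q)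
        rcases hS (SimpleGraph.deleteEdges_adj.mpr ⟨ha₁q, by simpa using hne⟩) with h | h
        · exact h
        · exact absurd h hqS
      have hcount := swap_count hS hScard hind hv
      rw [← hNAdef] at hcount
      -- pollution: (NA \ S) ∩ Nv ⊆ {q}
      have hpoll : NA \ S ⊆ ((NA \ S) \ Nv) ∪ {q} := by
        intro z hz
        by_cases hzNv : z ∈ Nv
        · have hzq : z = q := by
            by_contra hzq
            have hadj : G.Adj v z := (G.mem_neighborFinset v z).mp hzNv
            have hne : s(v, z) ≠ s(v, q) := by
              intro h
              rcases Sym2.eq_iff.mp h with ⟨-, h2⟩ | ⟨h1, -⟩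
              · exact hzq h2
              · exact G.irrefl (h1 ▸ hvq)
            have := nbrs_subset_cover hS hadj hvS hne
            exact (Finset.mem_sdiff.mp hz).2 this
          exact Finset.mem_union_right _ (Finset.mem_singleton.mpr hzq)
        · exact Finset.mem_union_left _ (Finset.mem_sdiff.mpr ⟨hz, hzNv⟩)
      have hpollcard : (NA \ S).card ≤ ((NA \ S) \ Nv).card + 1 := by
        calc (NA \ S).card ≤ (((NA \ S) \ Nv) ∪ {q}).card := Finset.card_le_card hpoll
        _ ≤ ((NA \ S) \ Nv).card + 1 :=
          (Finset.card_union_le _ _).trans (by simp)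
      -- inner set
      set A'' := A \ S with hA''def
      have hvA'' : v ∈ A'' := Finset.mem_sdiff.mpr ⟨hv, hvS⟩
      have hA''sub : A'' ⊆ A := Finset.sdiff_subset
      have hA''ssub : A'' ⊂ A := (Finset.ssubset_iff_of_subset hA''sub).mpr
        ⟨a₁, ha₁A, fun h => (Finset.mem_sdiff.mp h).2 ha₁S⟩
      have hA''ind : ∀ x ∈ A'', ∀ y ∈ A'', ¬G.Adj x y :=
        fun x hx y hy => hind x (hA''sub hx) y (hA''sub hy)
      have hIH := IH A'' hA''ssub hA''ind v hvA''
      rw [← hNvdef] at hIH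
      set NA'' := A''.biUnion (fun x => G.neighborFinset x) with hNA''def
      have hNA''S : NA'' \ Nv ⊆ S := by
        intro z hz
        obtain ⟨hzN, hzNv⟩ := Finset.mem_sdiff.mp hz
        obtain ⟨a, haA'', hza⟩ := Finset.mem_biUnion.mp hzN
        have haA : a ∈ A := hA''sub haA''
        have haS : a ∉ S := (Finset.mem_sdiff.mp haA'').2
        have hadj : G.Adj a z := (G.mem_neighborFinset a z).mp hza
        have hav : a ≠ v := by
          rintro rfl
          exact hzNv ((G.mem_neighborFinset a z).mpr hadj)
        refine nbrs_subset_cover hS hadj haS (fun h => ?_)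
        rcases Sym2.eq_iff.mp h with ⟨rfl, rfl⟩ | ⟨rfl, rfl⟩
        · exact hav rfl
        · exact hqA haA
      have hsub2 : NA'' \ Nv ⊆ NA \ Nv := by
        intro z hz
        obtain ⟨hzN, hzNv⟩ := Finset.mem_sdiff.mp hz
        exact Finset.mem_sdiff.mpr
          ⟨Finset.biUnion_subset_biUnion_of_subset_left _ hA''sub hzN, hzNv⟩
      have hsub1 : (NA \ S) \ Nv ⊆ NA \ Nv := by
        intro z hz
        obtain ⟨hzN, hzNv⟩ := Finset.mem_sdiff.mp hz
        exact Finset.mem_sdiff.mpr ⟨(Finset.mem_sdiff.mp hzN).1, hzNv⟩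
      have hdisj : Disjoint ((NA \ S) \ Nv) (NA'' \ Nv) := by
        refine Finset.disjoint_left.mpr (fun z hz hz' => ?_)
        exact ((Finset.mem_sdiff.mp (Finset.mem_sdiff.mp hz).1).2) (hNA''S hz')
      have hsum : ((NA \ S) \ Nv).card + (NA'' \ Nv).card ≤ (NA \ Nv).card := by
        rw [← Finset.card_union_of_disjoint hdisj]
        exact Finset.card_le_card (Finset.union_subset hsub1 hsub2)
      have hAcard : A''.card + (A ∩ S).card = A.card := Finset.card_sdiff_add_card_inter A S
      have hinter : S ∩ A = A ∩ S := Finset.inter_comm S A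
      rw [hinter] at hcount
      omega
    · -- no common neighbor: plain Hall on A.erase v suffices
      push_neg at hQ
      have hhall := hall_lemma hcrit (A.erase v)
        (fun x hx y hy => hind x (Finset.mem_of_mem_erase hx) y (Finset.mem_of_mem_erase hy))
      have hsub : (A.erase v).biUnion (fun x => G.neighborFinset x) ⊆ NA \ Nv := by
        intro z hz
        obtain ⟨a, ha, hza⟩ := Finset.mem_biUnion.mp hz
        have hzNA : z ∈ NA := Finset.mem_biUnion.mpr ⟨a, Finset.mem_of_mem_erase ha, hza⟩
        have hzNv : z ∉ Nv := fun hzNv =>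
          hQ a ha z ((G.mem_neighborFinset a z).mp hza) ((G.mem_neighborFinset v z).mp hzNv)
        exact Finset.mem_sdiff.mpr ⟨hzNA, hzNv⟩
      have hcard : (A.erase v).card + 1 = A.card := Finset.card_erase_add_one hv
      have hch := hhall.trans (Finset.card_le_card hsub)
      omega

/-- **Hajnal's degree bound** for τ-critical graphs: `d(v) + n ≤ 2τ + 1`. -/
lemma hajnal_bound (hcrit : IsTauCritical G) (v : V) :
    G.degree v + Fintype.card V ≤ 2 * tauNum G + 1 := by
  classical
  obtain ⟨b₀, hvb⟩ := hcrit.1 v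
  obtain ⟨S, hScard, hS, hvS, hb₀S⟩ := exists_crit_cover hcrit hvb
  set X := (Finset.univ \ S).erase b₀ with hXdef
  have hvX : v ∈ X := Finset.mem_erase.mpr
    ⟨hvb.ne, Finset.mem_sdiff.mpr ⟨Finset.mem_univ v, hvS⟩⟩
  have hXind : ∀ x ∈ X, ∀ y ∈ X, ¬G.Adj x y := by
    intro x hx y hy hxy
    have hxb : x ≠ b₀ := Finset.ne_of_mem_erase hx
    have hyb : y ≠ b₀ := Finset.ne_of_mem_erase hy
    have hxS : x ∉ S := (Finset.mem_sdiff.mp (Finset.mem_of_mem_erase hx)).2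
    have hyS : y ∉ S := (Finset.mem_sdiff.mp (Finset.mem_of_mem_erase hy)).2
    have hne : s(x, y) ≠ s(v, b₀) := by
      intro h
      rcases Sym2.eq_iff.mp h with ⟨-, rfl⟩ | ⟨rfl, -⟩
      · exact hyb rfl
      · exact hxb rfl
    exact hyS (nbrs_subset_cover hS hxy hxS hne)
  have hR := refined_hall hcrit X hXind v hvX
  set NX := X.biUnion (fun x => G.neighborFinset x) with hNXdef
  set Nv := G.neighborFinset v with hNvdef
  -- X, Nv, NX \ Nv are pairwise disjoint
  have hXNv : Disjoint X Nv := by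
    refine Finset.disjoint_left.mpr (fun x hx hxNv => ?_)
    have hadj : G.Adj v x := (G.mem_neighborFinset v x).mp hxNv
    have hxb : x ≠ b₀ := Finset.ne_of_mem_erase hx
    have hxS : x ∉ S := (Finset.mem_sdiff.mp (Finset.mem_of_mem_erase hx)).2
    have hne : s(v, x) ≠ s(v, b₀) := by
      intro h
      rcases Sym2.eq_iff.mp h with ⟨-, h2⟩ | ⟨h1, -⟩
      · exact hxb h2
      · exact G.irrefl (h1 ▸ hvb)
    exact hxS (nbrs_subset_cover hS hadj hvS hne)
  have hXNX : Disjoint X (NX \ Nv) := by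
    refine Finset.disjoint_left.mpr (fun x hx hxN => ?_)
    obtain ⟨a, haX, hax⟩ := Finset.mem_biUnion.mp (Finset.mem_sdiff.mp hxN).1
    exact hXind a haX x hx ((G.mem_neighborFinset a x).mp hax)
  have hNvNX : Disjoint Nv (NX \ Nv) :=
    Finset.disjoint_left.mpr (fun x hx hxN => (Finset.mem_sdiff.mp hxN).2 hx)
  have hdisjsum : X.card + Nv.card + (NX \ Nv).card ≤ Fintype.card V := by
    have h1 : Disjoint X (Nv ∪ (NX \ Nv)) := by
      rw [Finset.disjoint_union_right]; exact ⟨hXNv, hXNX⟩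
    calc X.card + Nv.card + (NX \ Nv).card
        = X.card + (Nv.card + (NX \ Nv).card) := by ring
      _ = X.card + (Nv ∪ (NX \ Nv)).card := by rw [Finset.card_union_of_disjoint hNvNX]
      _ = (X ∪ (Nv ∪ (NX \ Nv))).card := (Finset.card_union_of_disjoint h1).symm
      _ ≤ (Finset.univ : Finset V).card := Finset.card_le_card (Finset.subset_univ _)
      _ = Fintype.card V := Finset.card_univ
  have hXcard : X.card + 1 + S.card = Fintype.card V := by
    have hb₀u : b₀ ∈ Finset.univ \ S := Finset.mem_sdiff.mpr ⟨Finset.mem_univ b₀, hb₀S⟩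
    have h1 : X.card + 1 = (Finset.univ \ S).card := Finset.card_erase_add_one hb₀u
    have h2 : (Finset.univ \ S).card + (Finset.univ ∩ S).card = (Finset.univ : Finset V).card :=
      Finset.card_sdiff_add_card_inter _ _
    rw [Finset.univ_inter, Finset.card_univ] at h2
    omega
  have hdeg : G.degree v = Nv.card := rfl
  omega

end Aux

/-- For a τ-critical graph `G` with `τ(G) = t` and `|V(G)| = n`,
we have `n + λ₁ ≤ 2t + 1`. -/
theorem tau_critical_card_add_specRad_le (G : SimpleGraph V) [Fintype V] [DecidableEq V]
    [DecidableRel G.Adj] (t n : ℕ) (hcrit : IsTauCritical G) (ht : tauNum G = t)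
    (hn : Fintype.card V = n) :
    (n : ℝ) + specRad G ≤ 2 * t + 1 := by
  subst ht hn
  have hbound : (Fintype.card V : ℝ) ≤ 2 * (tauNum G : ℝ) + 1 := by
    rcases isEmpty_or_nonempty V with h | ⟨⟨v⟩⟩
    · simp [Fintype.card_eq_zero]
      positivity
    · have := hajnal_bound hcrit v
      have h2 : (Fintype.card V : ℕ) ≤ 2 * tauNum G + 1 := by omega
      exact_mod_cast h2
  have hkey : ∀ μ ∈ spectrum ℝ (G.adjMatrix ℝ),
      μ ≤ 2 * (tauNum G : ℝ) + 1 - (Fintype.card V : ℝ) := by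
    intro μ hμ
    have hμ' : μ ∈ spectrum ℝ (Matrix.toLin' (G.adjMatrix ℝ)) := by
      have heq : spectrum ℝ (Matrix.toLin' (G.adjMatrix ℝ)) = spectrum ℝ (G.adjMatrix ℝ) := by
        have := AlgEquiv.spectrum_eq
          (Matrix.toLinAlgEquiv' : Matrix V V ℝ ≃ₐ[ℝ] _) (G.adjMatrix ℝ)
        exact this
      rw [heq]; exact hμ
    have hev : Module.End.HasEigenvalue (Matrix.toLin' (G.adjMatrix ℝ)) μ :=
      Module.End.hasEigenvalue_iff_mem_spectrum.mpr hμ'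
    obtain ⟨i, hi⟩ := eigenvalue_mem_ball hev
    rw [Metric.mem_closedBall, Real.dist_eq] at hi
    have hdiag : (G.adjMatrix ℝ) i i = 0 := by simp
    have hrow : ∑ j ∈ Finset.univ.erase i, ‖(G.adjMatrix ℝ) i j‖ = (G.degree i : ℝ) := by
      have h1 : ∀ j, ‖(G.adjMatrix ℝ) i j‖ = if G.Adj i j then (1 : ℝ) else 0 := by
        intro j
        by_cases h : G.Adj i j <;> simp [SimpleGraph.adjMatrix_apply, h]
      calc ∑ j ∈ Finset.univ.erase i, ‖(G.adjMatrix ℝ) i j‖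
          = ∑ j ∈ Finset.univ.erase i, (if G.Adj i j then (1 : ℝ) else 0) :=
            Finset.sum_congr rfl (fun j _ => h1 j)
        _ = ∑ j ∈ Finset.univ, (if G.Adj i j then (1 : ℝ) else 0) :=
            Finset.sum_erase _ (by simp)
        _ = ((Finset.univ.filter (G.Adj i)).card : ℝ) := by rw [Finset.sum_boole]
        _ = (G.degree i : ℝ) := by
            rw [← SimpleGraph.neighborFinset_eq_filter, SimpleGraph.card_neighborFinset_eq_degree]
    rw [hdiag, sub_zero, hrow] at hi
    have hμle : μ ≤ (G.degree i : ℝ) := (le_abs_self μ).trans hi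
    have hd := hajnal_bound hcrit i
    have hd' : (G.degree i : ℝ) + (Fintype.card V : ℝ) ≤ 2 * (tauNum G : ℝ) + 1 := by
      exact_mod_cast hd
    linarith
  have hsup : specRad G ≤ 2 * (tauNum G : ℝ) + 1 - (Fintype.card V : ℝ) := by
    apply Real.sSup_le hkey
    linarith
  linarith [hsup]
end

section
/- Let G be a τ-critical graph and let S be an independent set of vertices of G. Then for every vertex v ∈ S, d(v) ≤ |N(S)| − |S| + 1, where N(S) denotes the set of vertices of G adjacent to some vertex of S. -/
open SimpleGraph

variable {V : Type*}

open Finset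

set_option linter.unusedSectionVars false

section Aux

variable (G : SimpleGraph V) [Fintype V] [DecidableEq V]

lemma tau_mem : ∃ T : Finset V, T.card = tauNum G ∧ IsTransversal G T := by
  have hne : {k | ∃ T : Finset V, T.card = k ∧ IsTransversal G T}.Nonempty :=
    ⟨(Finset.univ : Finset V).card, Finset.univ, rfl, fun u v _ => Or.inl (mem_univ u)⟩
  exact Nat.sInf_mem hne

lemma tau_le {T : Finset V} (h : IsTransversal G T) : tauNum G ≤ T.card :=
  Nat.sInf_le ⟨T, rfl, h⟩

lemma indep_bound {K : Finset V} (h : ∀ x ∈ K, ∀ y ∈ K, ¬ G.Adj x y) :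
    K.card + tauNum G ≤ Fintype.card V := by
  have htr : IsTransversal G (Finset.univ \ K) := by
    intro u v huv
    by_contra hc
    push_neg at hc
    have hu : u ∈ K := by
      have := hc.1; simp only [mem_sdiff, mem_univ, true_and, not_not] at this; exact this
    have hv : v ∈ K := by
      have := hc.2; simp only [mem_sdiff, mem_univ, true_and, not_not] at this; exact this
    exact h u hu v hv huv
  have h1 := tau_le G htr
  have h2 : (Finset.univ \ K).card + K.card = Fintype.card V := by
    rw [Finset.card_sdiff_add_card_eq_card (subset_univ K), card_univ]
  omega

lemma crit_edge (hcrit : IsTauCritical G) {a b : V} (hab : G.Adj a b) :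
    ∃ J : Finset V, a ∈ J ∧ b ∈ J ∧
      (∀ x ∈ J, ∀ y ∈ J, G.Adj x y → (x = a ∧ y = b) ∨ (x = b ∧ y = a)) ∧
      Fintype.card V + 1 ≤ J.card + tauNum G := by
  have he : s(a, b) ∈ G.edgeSet := hab
  have hlt := hcrit.2 _ he
  obtain ⟨T, hTcard, hTtr⟩ := tau_mem (G.deleteEdges {s(a, b)})
  have hcover : ∀ x ∈ T, IsTransversal G T → True := fun _ _ _ => trivial
  have hkey : ∀ u v : V, G.Adj u v → ¬ (u = a ∧ v = b) → ¬ (u = b ∧ v = a) → u ∈ T ∨ v ∈ T := by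
    intro u v huv h1 h2
    refine hTtr ?_
    rw [SimpleGraph.deleteEdges_adj]
    refine ⟨huv, ?_⟩
    simp only [Set.mem_singleton_iff, Sym2.eq_iff]
    tauto
  have haT : a ∉ T := by
    intro haT
    have htr : IsTransversal G T := by
      intro u v huv
      by_cases h1 : u = a ∧ v = b
      · exact Or.inl (h1.1 ▸ haT)
      by_cases h2 : u = b ∧ v = a
      · exact Or.inr (h2.2 ▸ haT)
      exact hkey u v huv h1 h2
    have := tau_le G htr
    omega
  have hbT : b ∉ T := by
    intro hbT
    have htr : IsTransversal G T := by
      intro u v huv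
      by_cases h1 : u = a ∧ v = b
      · exact Or.inr (h1.2 ▸ hbT)
      by_cases h2 : u = b ∧ v = a
      · exact Or.inl (h2.1 ▸ hbT)
      exact hkey u v huv h1 h2
    have := tau_le G htr
    omega
  refine ⟨Finset.univ \ T, by simp [haT], by simp [hbT], ?_, ?_⟩
  · intro x hx y hy hxy
    have hxT : x ∉ T := by simp only [mem_sdiff] at hx; exact hx.2
    have hyT : y ∉ T := by simp only [mem_sdiff] at hy; exact hy.2
    by_cases h1 : x = a ∧ y = b
    · exact Or.inl h1
    by_cases h2 : x = b ∧ y = a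
    · exact Or.inr h2
    rcases hkey x y hxy h1 h2 with h | h
    · exact absurd h hxT
    · exact absurd h hyT
  · have h2 : (Finset.univ \ T).card + T.card = Fintype.card V := by
      rw [Finset.card_sdiff_add_card_eq_card (subset_univ T), card_univ]
    omega

lemma hall_finset {W : Finset V} {A : V → Finset V}
    (h : ∀ U ⊆ W, U.card ≤ (U.biUnion A).card) :
    ∃ F : V → V, Set.InjOn F ↑W ∧ ∀ w ∈ W, F w ∈ A w := by
  classical
  have hcond : ∀ s : Finset {x // x ∈ W}, s.card ≤ (s.biUnion fun w => A w.1).card := by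
    intro s
    have h1 : (s.image Subtype.val).card = s.card :=
      Finset.card_image_of_injective _ Subtype.val_injective
    have h2 : (s.image Subtype.val).biUnion A = s.biUnion fun w => A w.1 := by
      ext x
      simp only [mem_biUnion, mem_image]
      constructor
      · rintro ⟨w, ⟨i, hi, rfl⟩, hx⟩; exact ⟨i, hi, hx⟩
      · rintro ⟨i, hi, hx⟩; exact ⟨i.1, ⟨i, hi, rfl⟩, hx⟩
    have h3 : s.image Subtype.val ⊆ W := by
      intro x hx
      rcases mem_image.mp hx with ⟨i, _, rfl⟩
      exact i.2
    calc s.card = (s.image Subtype.val).card := h1.symm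
      _ ≤ ((s.image Subtype.val).biUnion A).card := h _ h3
      _ = _ := by rw [h2]
  obtain ⟨f, hfinj, hfm⟩ :=
    (Finset.all_card_le_biUnion_card_iff_existsInjective' (fun w : {x // x ∈ W} => A w.1)).mp hcond
  refine ⟨fun x => if h : x ∈ W then f ⟨x, h⟩ else x, ?_, ?_⟩
  · intro x hx y hy hxy
    rw [Finset.mem_coe] at hx hy
    simp only [dif_pos hx, dif_pos hy] at hxy
    exact congrArg Subtype.val (hfinj hxy)
  · intro w hw
    simp only [dif_pos hw]
    exact hfm ⟨w, hw⟩

end Aux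

set_option maxHeartbeats 1000000 in
lemma key_lemma (G : SimpleGraph V) [Fintype V] [DecidableEq V] [DecidableRel G.Adj]
    (hcrit : IsTauCritical G) :
    ∀ m : ℕ, ∀ S : Finset V, S.card ≤ m → (∀ u ∈ S, ∀ w ∈ S, ¬ G.Adj u w) → ∀ v ∈ S,
      S.card ≤ ((S.biUnion fun u => G.neighborFinset u) \ G.neighborFinset v).card + 1 := by
  intro m
  induction m with
  | zero =>
    intro S hc _ v hv
    have := Finset.card_pos.mpr ⟨v, hv⟩
    omega
  | succ m IH =>
    intro S hSc hS v hv
    rcases Nat.lt_or_ge S.card (m + 1) with hlt | hge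
    · exact IH S (by omega) hS v hv
    have hScard : S.card = m + 1 := by omega
    set W := S.erase v with hWdef
    have hWsub : W ⊆ S := Finset.erase_subset _ _
    have hvW : v ∉ W := Finset.notMem_erase _ _
    have hWcard : W.card + 1 = S.card := Finset.card_erase_add_one hv
    set Nx : V → Finset V := fun w => G.neighborFinset w \ G.neighborFinset v with hNxdef
    set X := W.biUnion Nx with hXdef
    have hXeq : (S.biUnion fun u => G.neighborFinset u) \ G.neighborFinset v = X := by
      ext x
      simp only [hXdef, hNxdef, Finset.mem_sdiff, Finset.mem_biUnion, hWdef, Finset.mem_erase]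
      constructor
      · rintro ⟨⟨w, hwS, hxw⟩, hxv⟩
        refine ⟨w, ⟨?_, hwS⟩, hxw, hxv⟩
        rintro rfl
        exact hxv hxw
      · rintro ⟨w, ⟨_, hwS⟩, hxw, hxv⟩
        exact ⟨⟨w, hwS, hxw⟩, hxv⟩
    rw [hXeq]
    by_contra hcon
    have hX2 : X.card + 2 ≤ S.card := by omega
    have hXS : ∀ x ∈ X, x ∉ S := by
      intro x hx hxS
      rcases Finset.mem_biUnion.mp hx with ⟨w, hwW, hxw⟩
      have hadj : G.Adj w x :=
        (SimpleGraph.mem_neighborFinset _ _ _).mp (Finset.mem_sdiff.mp hxw).1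
      exact hS w (hWsub hwW) x hxS hadj
    have hXNv : ∀ x ∈ X, x ∉ G.neighborFinset v := by
      intro x hx
      rcases Finset.mem_biUnion.mp hx with ⟨w, hwW, hxw⟩
      exact (Finset.mem_sdiff.mp hxw).2
    have IH' : ∀ U ⊆ W, U.card < W.card → U.card ≤ (U.biUnion Nx).card := by
      intro U hUW hUlt
      have hvU : v ∉ U := fun h => hvW (hUW h)
      have hins : (insert v U).card = U.card + 1 := Finset.card_insert_of_notMem hvU
      have hsubS : insert v U ⊆ S := by
        intro x hx
        rcases Finset.mem_insert.mp hx with rfl | hx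
        · exact hv
        · exact hWsub (hUW hx)
      have hindep : ∀ a ∈ insert v U, ∀ b ∈ insert v U, ¬ G.Adj a b :=
        fun a ha b hb => hS a (hsubS ha) b (hsubS hb)
      have hcard2 : (insert v U).card ≤ m := by omega
      have h2 := IH (insert v U) hcard2 hindep v (Finset.mem_insert_self _ _)
      have heq : ((insert v U).biUnion fun u => G.neighborFinset u) \ G.neighborFinset v
          = U.biUnion Nx := by
        ext x
        simp only [hNxdef, Finset.mem_sdiff, Finset.mem_biUnion, Finset.mem_insert]
        constructor
        · rintro ⟨⟨w, rfl | hwU, hxw⟩, hxv⟩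
          · exact absurd hxw hxv
          · exact ⟨w, hwU, hxw, hxv⟩
        · rintro ⟨w, hwU, hxw, hxv⟩
          exact ⟨⟨w, Or.inr hwU, hxw⟩, hxv⟩
      rw [heq] at h2
      omega
    have hXW : X.card + 1 = W.card := by
      by_contra hne
      have h1 : X.card + 1 < W.card := by omega
      obtain ⟨U, hUW, hUcard⟩ := Finset.exists_subset_card_eq (s := W) (n := X.card + 1) (by omega)
      have h2 := IH' U hUW (by omega)
      have h3 : U.biUnion Nx ⊆ X := Finset.biUnion_subset_biUnion_of_subset_left _ hUW
      have h4 := Finset.card_le_card h3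
      omega
    by_cases hcase : ∃ u, G.Adj v u ∧ ∃ w ∈ W, G.Adj w u
    · -- Case (i): some neighbor of v is also a neighbor of W
      obtain ⟨u, hvu, w1, hw1W, hw1u⟩ := hcase
      have huNv : u ∈ G.neighborFinset v := (SimpleGraph.mem_neighborFinset _ _ _).mpr hvu
      have huX : u ∉ X := fun h => hXNv u h huNv
      have huW : u ∉ W := fun h => hS v hv u (hWsub h) hvu
      set A : V → Finset V := fun w => Nx w ∪ (if G.Adj w u then {u} else ∅) with hAdef
      have hAsub : ∀ w ∈ W, A w ⊆ insert u X := by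
        intro w hw x hx
        rcases Finset.mem_union.mp hx with hx | hx
        · exact Finset.mem_insert_of_mem (Finset.mem_biUnion.mpr ⟨w, hw, hx⟩)
        · by_cases hwu : G.Adj w u
          · rw [if_pos hwu] at hx
            rw [Finset.mem_singleton.mp hx]
            exact Finset.mem_insert_self _ _
          · rw [if_neg hwu] at hx
            exact absurd hx (Finset.notMem_empty x)
      have hhall : ∀ U ⊆ W, U.card ≤ (U.biUnion A).card := by
        intro U hUW
        rcases lt_or_eq_of_le (Finset.card_le_card hUW) with hlt2 | heq2
        · have h1 := IH' U hUW hlt2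
          have h2 : U.biUnion Nx ⊆ U.biUnion A := by
            intro x hx
            rcases Finset.mem_biUnion.mp hx with ⟨w, hw, hxw⟩
            exact Finset.mem_biUnion.mpr ⟨w, hw, Finset.mem_union_left _ hxw⟩
          have := Finset.card_le_card h2
          omega
        · have hUW' : U = W := Finset.eq_of_subset_of_card_le hUW (le_of_eq heq2.symm)
          subst hUW'
          have hsub : insert u X ⊆ W.biUnion A := by
            intro x hx
            rcases Finset.mem_insert.mp hx with hxu | hx
            · refine Finset.mem_biUnion.mpr ⟨w1, hw1W, Finset.mem_union_right _ ?_⟩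
              rw [if_pos hw1u, hxu]
              exact Finset.mem_singleton_self _
            · rcases Finset.mem_biUnion.mp hx with ⟨w, hw, hxw⟩
              exact Finset.mem_biUnion.mpr ⟨w, hw, Finset.mem_union_left _ hxw⟩
          have h1 := Finset.card_le_card hsub
          have h2 : (insert u X).card = X.card + 1 := Finset.card_insert_of_notMem huX
          omega
      obtain ⟨F, hFinj, hFA⟩ := hall_finset hhall
      have hFadj : ∀ w ∈ W, G.Adj w (F w) := by
        intro w hw
        rcases Finset.mem_union.mp (hFA w hw) with hx | hx
        · exact (SimpleGraph.mem_neighborFinset _ _ _).mp (Finset.mem_sdiff.mp hx).1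
        · by_cases hwu : G.Adj w u
          · rw [if_pos hwu, Finset.mem_singleton] at hx
            rw [hx]; exact hwu
          · rw [if_neg hwu] at hx
            exact absurd hx (Finset.notMem_empty _)
      have himg : W.image F = insert u X := by
        apply Finset.eq_of_subset_of_card_le
        · intro x hx
          rcases Finset.mem_image.mp hx with ⟨w, hw, rfl⟩
          exact hAsub w hw (hFA w hw)
        · rw [Finset.card_image_of_injOn hFinj, Finset.card_insert_of_notMem huX]
          omega
      obtain ⟨J, hvJ, huJ, halmost, hJcard⟩ := crit_edge G hcrit hvu
      have hJNv : ∀ z ∈ J, G.Adj v z → z = u := by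
        intro z hz hadj
        rcases halmost v hvJ z hz hadj with ⟨_, h⟩ | ⟨h, _⟩
        · exact h
        · exact absurd h (G.ne_of_adj hvu)
      set Istar := (J \ insert u X) ∪ W with hIdef
      have hcross : ∀ w ∈ W, ∀ z ∈ J \ insert u X, ¬ G.Adj w z := by
        intro w hw z hz hadj
        have hzJ := (Finset.mem_sdiff.mp hz).1
        have hznot := (Finset.mem_sdiff.mp hz).2
        by_cases hzv : G.Adj v z
        · exact hznot (by rw [hJNv z hzJ hzv]; exact Finset.mem_insert_self _ _)
        · have hmem : z ∈ Nx w := Finset.mem_sdiff.mpr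
            ⟨(SimpleGraph.mem_neighborFinset _ _ _).mpr hadj,
             fun h => hzv ((SimpleGraph.mem_neighborFinset _ _ _).mp h)⟩
          exact hznot (Finset.mem_insert_of_mem (Finset.mem_biUnion.mpr ⟨w, hw, hmem⟩))
      have hIindep : ∀ x ∈ Istar, ∀ y ∈ Istar, ¬ G.Adj x y := by
        intro x hx y hy hadj
        rcases Finset.mem_union.mp hx with hx' | hx' <;>
          rcases Finset.mem_union.mp hy with hy' | hy'
        · rcases halmost x (Finset.mem_sdiff.mp hx').1 y (Finset.mem_sdiff.mp hy').1 hadj with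
            ⟨_, h⟩ | ⟨h, _⟩
          · exact (Finset.mem_sdiff.mp hy').2 (by rw [h]; exact Finset.mem_insert_self _ _)
          · exact (Finset.mem_sdiff.mp hx').2 (by rw [h]; exact Finset.mem_insert_self _ _)
        · exact hcross y hy' x hx' hadj.symm
        · exact hcross x hx' y hy' hadj
        · exact hS x (hWsub hx') y (hWsub hy') hadj
      have hpairs : ∀ w ∈ W, (J ∩ {w, F w}).card ≤ 1 := by
        intro w hw
        rw [Finset.card_le_one]
        intro a ha b hb
        have haJ := (Finset.mem_inter.mp ha).1
        have ha2 := (Finset.mem_inter.mp ha).2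
        have hbJ := (Finset.mem_inter.mp hb).1
        have hb2 := (Finset.mem_inter.mp hb).2
        have hno : ¬ (w ∈ J ∧ F w ∈ J) := by
          rintro ⟨hwJ, hFJ⟩
          rcases halmost w hwJ (F w) hFJ (hFadj w hw) with ⟨h1, _⟩ | ⟨h1, _⟩
          · exact hvW (h1 ▸ hw)
          · exact huW (h1 ▸ hw)
        rcases Finset.mem_insert.mp ha2 with rfl | ha3
        · rcases Finset.mem_insert.mp hb2 with rfl | hb3
          · rfl
          · exact absurd ⟨haJ, (Finset.mem_singleton.mp hb3) ▸ hbJ⟩ hno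
        · rcases Finset.mem_insert.mp hb2 with rfl | hb3
          · exact absurd ⟨hbJ, (Finset.mem_singleton.mp ha3) ▸ haJ⟩ hno
          · rw [Finset.mem_singleton.mp ha3, Finset.mem_singleton.mp hb3]
      have hpairbound : (J ∩ (W ∪ insert u X)).card ≤ W.card := by
        have hsub : J ∩ (W ∪ insert u X) ⊆ W.biUnion (fun w => J ∩ {w, F w}) := by
          intro z hz
          have hzJ := (Finset.mem_inter.mp hz).1
          rcases Finset.mem_union.mp (Finset.mem_inter.mp hz).2 with hzW | hzY
          · exact Finset.mem_biUnion.mpr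
              ⟨z, hzW, Finset.mem_inter.mpr ⟨hzJ, Finset.mem_insert_self _ _⟩⟩
          · rw [← himg] at hzY
            rcases Finset.mem_image.mp hzY with ⟨w, hw, hFw⟩
            refine Finset.mem_biUnion.mpr ⟨w, hw, Finset.mem_inter.mpr ⟨hzJ, ?_⟩⟩
            rw [← hFw]
            exact Finset.mem_insert_of_mem (Finset.mem_singleton_self _)
        calc (J ∩ (W ∪ insert u X)).card
            ≤ (W.biUnion (fun w => J ∩ {w, F w})).card := Finset.card_le_card hsub
          _ ≤ ∑ w ∈ W, (J ∩ {w, F w}).card := Finset.card_biUnion_le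
          _ ≤ ∑ _w ∈ W, 1 := Finset.sum_le_sum hpairs
          _ = W.card := by simp
      have hsplit : (J ∩ W).card + (J ∩ insert u X).card ≤ W.card := by
        have hdist : J ∩ (W ∪ insert u X) = (J ∩ W) ∪ (J ∩ insert u X) :=
          Finset.inter_union_distrib_left _ _ _
        have hWY : Disjoint W (insert u X) := by
          rw [Finset.disjoint_left]
          intro z hzW hzY
          rcases Finset.mem_insert.mp hzY with rfl | hzX
          · exact huW hzW
          · exact hXS z hzX (hWsub hzW)
        have hdisj : Disjoint (J ∩ W) (J ∩ insert u X) :=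
          hWY.mono Finset.inter_subset_right Finset.inter_subset_right
        rw [hdist, Finset.card_union_of_disjoint hdisj] at hpairbound
        exact hpairbound
      have e1 : Istar.card + ((J \ insert u X) ∩ W).card = (J \ insert u X).card + W.card :=
        Finset.card_union_add_card_inter _ _
      have e2 : (J \ insert u X) ∩ W = J ∩ W := by
        ext z
        simp only [Finset.mem_inter, Finset.mem_sdiff]
        constructor
        · rintro ⟨⟨h1, _⟩, h2⟩; exact ⟨h1, h2⟩
        · rintro ⟨h1, h2⟩
          refine ⟨⟨h1, fun hz => ?_⟩, h2⟩
          rcases Finset.mem_insert.mp hz with rfl | hzX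
          · exact huW h2
          · exact hXS z hzX (hWsub h2)
      have e3 : (J ∩ insert u X).card + (J \ insert u X).card = J.card :=
        Finset.card_inter_add_card_sdiff _ _
      have e4 := indep_bound G hIindep
      rw [e2] at e1
      omega
    · -- Case (ii): no common neighbor of v and W
      push_neg at hcase
      have hNwX : ∀ w ∈ W, G.neighborFinset w ⊆ X := by
        intro w hw z hz
        have hadj : G.Adj w z := (SimpleGraph.mem_neighborFinset _ _ _).mp hz
        have hzNv : z ∉ G.neighborFinset v := fun h =>
          hcase z ((SimpleGraph.mem_neighborFinset _ _ _).mp h) w hw hadj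
        exact Finset.mem_biUnion.mpr ⟨w, hw, Finset.mem_sdiff.mpr ⟨hz, hzNv⟩⟩
      obtain ⟨w0, hw0W⟩ : W.Nonempty := Finset.card_pos.mp (by omega)
      obtain ⟨x0, hx0adj⟩ := hcrit.1 w0
      have hx0X : x0 ∈ X := hNwX w0 hw0W ((SimpleGraph.mem_neighborFinset _ _ _).mpr hx0adj)
      set W' := W.erase w0 with hW'def
      have hW'sub : W' ⊆ W := Finset.erase_subset _ _
      have hW'card : W'.card + 1 = W.card := Finset.card_erase_add_one hw0W
      have hhall : ∀ U ⊆ W', U.card ≤ (U.biUnion Nx).card := by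
        intro U hUW'
        refine IH' U (hUW'.trans hW'sub) ?_
        have := Finset.card_le_card hUW'
        omega
      obtain ⟨F, hFinj, hFA⟩ := hall_finset hhall
      have hFadj : ∀ w ∈ W', G.Adj w (F w) := fun w hw =>
        (SimpleGraph.mem_neighborFinset _ _ _).mp (Finset.mem_sdiff.mp (hFA w hw)).1
      have hFX : ∀ w ∈ W', F w ∈ X := fun w hw =>
        Finset.mem_biUnion.mpr ⟨w, hW'sub hw, hFA w hw⟩
      have himg : W'.image F = X := by
        apply Finset.eq_of_subset_of_card_le
        · intro x hx
          rcases Finset.mem_image.mp hx with ⟨w, hw, rfl⟩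
          exact hFX w hw
        · rw [Finset.card_image_of_injOn hFinj]
          omega
      obtain ⟨J, hw0J, hx0J, halmost, hJcard⟩ := crit_edge G hcrit hx0adj
      set Istar := (J \ X) ∪ W with hIdef
      have hcross : ∀ w ∈ W, ∀ z ∈ J \ X, ¬ G.Adj w z := by
        intro w hw z hz hadj
        exact (Finset.mem_sdiff.mp hz).2
          (hNwX w hw ((SimpleGraph.mem_neighborFinset _ _ _).mpr hadj))
      have hIindep : ∀ x ∈ Istar, ∀ y ∈ Istar, ¬ G.Adj x y := by
        intro x hx y hy hadj
        rcases Finset.mem_union.mp hx with hx' | hx' <;>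
          rcases Finset.mem_union.mp hy with hy' | hy'
        · rcases halmost x (Finset.mem_sdiff.mp hx').1 y (Finset.mem_sdiff.mp hy').1 hadj with
            ⟨_, h⟩ | ⟨h, _⟩
          · exact (Finset.mem_sdiff.mp hy').2 (by rw [h]; exact hx0X)
          · exact (Finset.mem_sdiff.mp hx').2 (by rw [h]; exact hx0X)
        · exact hcross y hy' x hx' hadj.symm
        · exact hcross x hx' y hy' hadj
        · exact hS x (hWsub hx') y (hWsub hy') hadj
      have hpairs : ∀ w ∈ W', (J ∩ {w, F w}).card ≤ 1 := by
        intro w hw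
        rw [Finset.card_le_one]
        intro a ha b hb
        have haJ := (Finset.mem_inter.mp ha).1
        have ha2 := (Finset.mem_inter.mp ha).2
        have hbJ := (Finset.mem_inter.mp hb).1
        have hb2 := (Finset.mem_inter.mp hb).2
        have hno : ¬ (w ∈ J ∧ F w ∈ J) := by
          rintro ⟨hwJ, hFJ⟩
          rcases halmost w hwJ (F w) hFJ (hFadj w hw) with ⟨h1, _⟩ | ⟨h1, _⟩
          · exact absurd hw (by rw [h1]; exact Finset.notMem_erase _ _)
          · exact hXS w (h1.symm ▸ hx0X) (hWsub (hW'sub hw))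
        rcases Finset.mem_insert.mp ha2 with rfl | ha3
        · rcases Finset.mem_insert.mp hb2 with rfl | hb3
          · rfl
          · exact absurd ⟨haJ, (Finset.mem_singleton.mp hb3) ▸ hbJ⟩ hno
        · rcases Finset.mem_insert.mp hb2 with rfl | hb3
          · exact absurd ⟨hbJ, (Finset.mem_singleton.mp ha3) ▸ haJ⟩ hno
          · rw [Finset.mem_singleton.mp ha3, Finset.mem_singleton.mp hb3]
      have hpairbound : (J ∩ (W ∪ X)).card ≤ W.card := by
        have hsub : J ∩ (W ∪ X) ⊆ insert w0 (W'.biUnion (fun w => J ∩ {w, F w})) := by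
          intro z hz
          have hzJ := (Finset.mem_inter.mp hz).1
          rcases Finset.mem_union.mp (Finset.mem_inter.mp hz).2 with hzW | hzX
          · by_cases hzw0 : z = w0
            · rw [hzw0]; exact Finset.mem_insert_self _ _
            · exact Finset.mem_insert_of_mem (Finset.mem_biUnion.mpr
                ⟨z, Finset.mem_erase.mpr ⟨hzw0, hzW⟩,
                 Finset.mem_inter.mpr ⟨hzJ, Finset.mem_insert_self _ _⟩⟩)
          · rw [← himg] at hzX
            rcases Finset.mem_image.mp hzX with ⟨w, hw, hFw⟩
            refine Finset.mem_insert_of_mem (Finset.mem_biUnion.mpr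
              ⟨w, hw, Finset.mem_inter.mpr ⟨hzJ, ?_⟩⟩)
            rw [← hFw]
            exact Finset.mem_insert_of_mem (Finset.mem_singleton_self _)
        have h1 := Finset.card_le_card hsub
        have h2 := Finset.card_insert_le w0 (W'.biUnion (fun w => J ∩ {w, F w}))
        have h3 : (W'.biUnion (fun w => J ∩ {w, F w})).card
            ≤ ∑ w ∈ W', (J ∩ {w, F w}).card := Finset.card_biUnion_le
        have h4 : ∑ w ∈ W', (J ∩ {w, F w}).card ≤ ∑ _w ∈ W', 1 := Finset.sum_le_sum hpairs
        have h5 : (∑ _w ∈ W', (1:ℕ)) = W'.card := by simp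
        omega
      have hsplit : (J ∩ W).card + (J ∩ X).card ≤ W.card := by
        have hdist : J ∩ (W ∪ X) = (J ∩ W) ∪ (J ∩ X) :=
          Finset.inter_union_distrib_left _ _ _
        have hWX : Disjoint W X := by
          rw [Finset.disjoint_left]
          intro z hzW hzX
          exact hXS z hzX (hWsub hzW)
        have hdisj : Disjoint (J ∩ W) (J ∩ X) :=
          hWX.mono Finset.inter_subset_right Finset.inter_subset_right
        rw [hdist, Finset.card_union_of_disjoint hdisj] at hpairbound
        exact hpairbound
      have e1 : Istar.card + ((J \ X) ∩ W).card = (J \ X).card + W.card :=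
        Finset.card_union_add_card_inter _ _
      have e2 : (J \ X) ∩ W = J ∩ W := by
        ext z
        simp only [Finset.mem_inter, Finset.mem_sdiff]
        constructor
        · rintro ⟨⟨h1, _⟩, h2⟩; exact ⟨h1, h2⟩
        · rintro ⟨h1, h2⟩
          exact ⟨⟨h1, fun hz => hXS z hz (hWsub h2)⟩, h2⟩
      have e3 : (J ∩ X).card + (J \ X).card = J.card :=
        Finset.card_inter_add_card_sdiff _ _
      have e4 := indep_bound G hIindep
      rw [e2] at e1
      omega

/-- Surányi. For a τ-critical graph `G` and an independent set `S`,
every `v ∈ S` satisfies `d(v) ≤ |N(S)| − |S| + 1`, where `N(S)` is the set of vertices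
adjacent to some vertex of `S`. -/
theorem tau_critical_degree_le_of_indep (G : SimpleGraph V) [Fintype V] [DecidableEq V]
    [DecidableRel G.Adj] (hcrit : IsTauCritical G) (S : Finset V)
    (hS : ∀ u ∈ S, ∀ v ∈ S, ¬ G.Adj u v) :
    ∀ v ∈ S, (G.degree v : ℤ) ≤
      ((S.biUnion fun u => G.neighborFinset u).card : ℤ) - S.card + 1 := by
  intro v hv
  have hkey := key_lemma G hcrit S.card S le_rfl hS v hv
  have hNvsub : G.neighborFinset v ⊆ S.biUnion (fun u => G.neighborFinset u) :=
    by exact Finset.subset_biUnion_of_mem (fun u => G.neighborFinset u) hv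
  have hcard : ((S.biUnion fun u => G.neighborFinset u) \ G.neighborFinset v).card
      + (G.neighborFinset v).card = (S.biUnion fun u => G.neighborFinset u).card :=
    Finset.card_sdiff_add_card_eq_card hNvsub
  rw [SimpleGraph.card_neighborFinset_eq_degree] at hcard
  omega
end

section
/- For any τ-critical graph G with τ(G) = t, the number of vertices satisfies |V(G)| ≤ 2t. -/
open SimpleGraph

variable {V : Type*}

open Finset

lemma exists_min_transversal (G : SimpleGraph V) [Fintype V] :
    ∃ T : Finset V, IsTransversal G T ∧ T.card = tauNum G := by
  have hne : {k | ∃ T : Finset V, T.card = k ∧ IsTransversal G T}.Nonempty :=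
    ⟨(Finset.univ : Finset V).card, Finset.univ, rfl, fun u v _ => Or.inl (Finset.mem_univ u)⟩
  obtain ⟨T, hT1, hT2⟩ := Nat.sInf_mem hne
  exact ⟨T, hT2, hT1⟩

lemma tauNum_le_card (G : SimpleGraph V) [Fintype V] {T : Finset V} (hT : IsTransversal G T) :
    tauNum G ≤ T.card := Nat.sInf_le ⟨T, rfl, hT⟩

lemma hajnal (G : SimpleGraph V) [Fintype V] [DecidableEq V] [DecidableRel G.Adj]
    (hcrit : IsTauCritical G) :
    ∀ (n : ℕ) (S : Finset V), S.card = n → (∀ x ∈ S, ∀ y ∈ S, ¬ G.Adj x y) →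
      S.card ≤ (S.biUnion fun v => G.neighborFinset v).card := by
  intro n
  induction n using Nat.strong_induction_on with
  | _ n ih =>
    intro S hcard hind
    by_contra hlt
    push_neg at hlt
    set NS := S.biUnion (fun v => G.neighborFinset v) with hNS
    -- S and NS are disjoint
    have hdisj : ∀ x ∈ S, x ∉ NS := by
      intro x hx hxN
      obtain ⟨y, hy, hadj⟩ := Finset.mem_biUnion.mp hxN
      exact hind y hy x hx ((G.mem_neighborFinset y x).mp hadj)
    have hSpos : 0 < S.card := lt_of_le_of_lt (Nat.zero_le _) hlt
    obtain ⟨s, hs⟩ := Finset.card_pos.mp hSpos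
    obtain ⟨u, hu⟩ := hcrit.1 s
    have huNS : u ∈ NS := Finset.mem_biUnion.mpr ⟨s, hs, (G.mem_neighborFinset s u).mpr hu⟩
    have hcrit2 := hcrit.2 s(s, u) hu
    obtain ⟨T', hT'trans, hT'card⟩ := exists_min_transversal (G.deleteEdges {s(s, u)})
    have hT'lt : T'.card < tauNum G := by rw [hT'card]; exact hcrit2
    -- Hall's condition for the erase
    have hall : ∀ (W : Finset {x // x ∈ S.erase s}),
        W.card ≤ (W.biUnion fun x => G.neighborFinset x.1).card := by
      intro W
      set W' := W.image (Subtype.val) with hW'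
      have hcardW : W'.card = W.card := Finset.card_image_of_injective _ Subtype.val_injective
      have hWsub : W' ⊆ S.erase s := by
        intro x hx
        obtain ⟨y, _, rfl⟩ := Finset.mem_image.mp hx
        exact y.2
      have hWS : W' ⊆ S := hWsub.trans (Finset.erase_subset s S)
      have hWlt : W'.card < n := by
        calc W'.card ≤ (S.erase s).card := Finset.card_le_card hWsub
        _ < S.card := by
            rw [Finset.card_erase_of_mem hs]; omega
        _ = n := hcard
      have hWind : ∀ x ∈ W', ∀ y ∈ W', ¬ G.Adj x y :=
        fun x hx y hy => hind x (hWS hx) y (hWS hy)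
      have := ih W'.card hWlt W' rfl hWind
      have heq : W.biUnion (fun x => G.neighborFinset x.1) =
          W'.biUnion (fun v => G.neighborFinset v) := by
        rw [hW', Finset.image_biUnion]
      rw [heq, ← hcardW]
      exact this
    obtain ⟨f, hfinj, hfmem⟩ :=
      (Finset.all_card_le_biUnion_card_iff_exists_injective
        (fun x : {x // x ∈ S.erase s} => G.neighborFinset x.1)).mp hall
    -- the injection into T' ∩ (S ∪ NS)
    have hSne : ∀ w ∈ S, w ≠ u := fun w hw hwu => hdisj w hw (hwu ▸ huNS)
    have hedge_ne : ∀ (w : V), w ∈ S.erase s → ∀ z, z ∈ G.neighborFinset w →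
        s(w, z) ≠ s(s, u) := by
      intro w hw z _ hcontra
      rw [Sym2.eq_iff] at hcontra
      rcases hcontra with ⟨h1, _⟩ | ⟨h1, _⟩
      · exact (Finset.mem_erase.mp hw).1 h1
      · exact hSne w (Finset.mem_of_mem_erase hw) h1
    have hinj_card : (S.erase s).card ≤ (T' ∩ (S ∪ NS)).card := by
      apply Finset.card_le_card_of_injOn
        (fun w => if hw : w ∈ S.erase s then (if w ∈ T' then w else f ⟨w, hw⟩) else w)
      · intro w hw
        simp only [dif_pos (Finset.mem_coe.mp hw)]
        by_cases h1 : w ∈ T'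
        · rw [if_pos h1]
          exact Finset.mem_inter.mpr ⟨h1,
            Finset.mem_union_left _ (Finset.mem_of_mem_erase hw)⟩
        · rw [if_neg h1]
          have hfw := hfmem ⟨w, hw⟩
          have hadj : G.Adj w (f ⟨w, hw⟩) := (G.mem_neighborFinset _ _).mp hfw
          have hne := hedge_ne w hw _ hfw
          have hadj' : (G.deleteEdges {s(s, u)}).Adj w (f ⟨w, hw⟩) := by
            rw [SimpleGraph.deleteEdges_adj]
            exact ⟨hadj, by simpa using hne⟩
          have hmem : f ⟨w, hw⟩ ∈ T' := by
            rcases hT'trans hadj' with h | h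
            · exact absurd h h1
            · exact h
          refine Finset.mem_inter.mpr ⟨hmem, Finset.mem_union_right _ ?_⟩
          exact Finset.mem_biUnion.mpr ⟨w, Finset.mem_of_mem_erase hw, hfw⟩
      · intro w1 h1 w2 h2 heq
        simp only [Finset.mem_coe] at h1 h2
        simp only [dif_pos h1, dif_pos h2] at heq
        have hNmem : ∀ (w : V) (hw : w ∈ S.erase s), f ⟨w, hw⟩ ∈ NS := fun w hw =>
          Finset.mem_biUnion.mpr ⟨w, Finset.mem_of_mem_erase hw, hfmem ⟨w, hw⟩⟩
        by_cases c1 : w1 ∈ T'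
        · by_cases c2 : w2 ∈ T'
          · rw [if_pos c1, if_pos c2] at heq; exact heq
          · rw [if_pos c1, if_neg c2] at heq
            exact absurd (by rw [heq]; exact hNmem w2 h2)
              (hdisj w1 (Finset.mem_of_mem_erase h1))
        · by_cases c2 : w2 ∈ T'
          · rw [if_neg c1, if_pos c2] at heq
            exact absurd (heq ▸ hNmem w1 h1) (hdisj w2 (Finset.mem_of_mem_erase h2))
          · rw [if_neg c1, if_neg c2] at heq
            exact congrArg Subtype.val (hfinj heq)
    -- the exchanged transversal
    have hT''trans : IsTransversal G ((T' \ (S ∪ NS)) ∪ NS) := by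
      intro x y hxy
      by_cases he : s(x, y) = s(s, u)
      · rw [Sym2.eq_iff] at he
        rcases he with ⟨hx, hy⟩ | ⟨hx, hy⟩
        · right; rw [hy]; exact Finset.mem_union_right _ huNS
        · left; rw [hx]; exact Finset.mem_union_right _ huNS
      · have hadj' : (G.deleteEdges {s(s, u)}).Adj x y := by
          rw [SimpleGraph.deleteEdges_adj]
          exact ⟨hxy, by simpa using he⟩
        rcases hT'trans hadj' with hx | hy
        · by_cases hxS : x ∈ S
          · right
            exact Finset.mem_union_right _
              (Finset.mem_biUnion.mpr ⟨x, hxS, (G.mem_neighborFinset x y).mpr hxy⟩)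
          · left
            by_cases hxNS : x ∈ NS
            · exact Finset.mem_union_right _ hxNS
            · exact Finset.mem_union_left _ (Finset.mem_sdiff.mpr ⟨hx, by
                simp only [Finset.mem_union]; tauto⟩)
        · by_cases hyS : y ∈ S
          · left
            exact Finset.mem_union_right _
              (Finset.mem_biUnion.mpr ⟨y, hyS, (G.mem_neighborFinset y x).mpr hxy.symm⟩)
          · right
            by_cases hyNS : y ∈ NS
            · exact Finset.mem_union_right _ hyNS
            · exact Finset.mem_union_left _ (Finset.mem_sdiff.mpr ⟨hy, by
                simp only [Finset.mem_union]; tauto⟩)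
    have h1 : tauNum G ≤ ((T' \ (S ∪ NS)) ∪ NS).card := tauNum_le_card G hT''trans
    have h2 : ((T' \ (S ∪ NS)) ∪ NS).card ≤ (T' \ (S ∪ NS)).card + NS.card :=
      Finset.card_union_le _ _
    have h3 : (T' \ (S ∪ NS)).card + (T' ∩ (S ∪ NS)).card = T'.card :=
      Finset.card_sdiff_add_card_inter _ _
    have h4 : (S.erase s).card = S.card - 1 := Finset.card_erase_of_mem hs
    omega

/-- Erdős–Gallai. For a τ-critical graph `G` with `τ(G) = t`,
`|V(G)| ≤ 2t`. -/
theorem tau_critical_card_le (G : SimpleGraph V) [Fintype V]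
    (t : ℕ) (hcrit : IsTauCritical G) (ht : tauNum G = t) :
    Fintype.card V ≤ 2 * t := by
  classical
  obtain ⟨T, hTtrans, hTcard⟩ := exists_min_transversal G
  set I := (Finset.univ : Finset V) \ T with hI
  have hind : ∀ x ∈ I, ∀ y ∈ I, ¬ G.Adj x y := by
    intro x hx y hy hadj
    rcases hTtrans hadj with h | h
    · exact (Finset.mem_sdiff.mp hx).2 h
    · exact (Finset.mem_sdiff.mp hy).2 h
  have hhaj := hajnal G hcrit I.card I rfl hind
  have hsub : (I.biUnion fun v => G.neighborFinset v) ⊆ T := by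
    intro z hz
    obtain ⟨x, hx, hzx⟩ := Finset.mem_biUnion.mp hz
    rcases hTtrans ((G.mem_neighborFinset x z).mp hzx) with h | h
    · exact absurd h (Finset.mem_sdiff.mp hx).2
    · exact h
  have hIcard : I.card ≤ T.card := le_trans hhaj (Finset.card_le_card hsub)
  have hVcard : I.card = Fintype.card V - T.card := by
    rw [hI, Finset.card_sdiff_of_subset (Finset.subset_univ T), Finset.card_univ]
  have hTle : T.card ≤ Fintype.card V := by
    rw [← Finset.card_univ]; exact Finset.card_le_card (Finset.subset_univ T)
  omega
end
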